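/- Let ν > 0, c > 0, d > 0, and let g ∈ H_ν(ℝ; ℝ^d) (the exponentially weighted Bochner space with weight e^{−2νt}). Define Ψ(t) = ∫_{−∞}^t (d/c) e^{−(t−s)/c} g(s) ds. Then Ψ ∈ H_ν(ℝ; ℝ^d) with ‖Ψ‖_ν ≤ (d/(1+νc))·‖g‖_ν, and Ψ is the unique solution in H_ν of the equation cΨ' + Ψ = d·g (with Ψ' the distributional derivative, belonging to H_ν). -/

import Mathlib

open MeasureTheory Real

section AuxADE

open Set Filter Topology ENNReal

lemma aux_intOn_exp_neg_Ioi {b : ℝ} (hb : 0 < b) (t : ℝ) :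
    IntegrableOn (fun x => Real.exp (-(b * x))) (Set.Ioi t) := by
  simpa [neg_mul] using exp_neg_integrableOn_Ioi t hb

lemma aux_hasDerivAt_exp_neg {b : ℝ} (hb : b ≠ 0) (x : ℝ) :
    HasDerivAt (fun y => -Real.exp (-(b * y)) / b) (Real.exp (-(b * x))) x := by
  have h1 : HasDerivAt (fun y : ℝ => -(b * y)) (-b) x := by
    simpa using ((hasDerivAt_id x).const_mul b).fun_neg
  have h2 := (h1.exp).fun_neg.div_const b
  refine h2.congr_deriv ?_
  field_simp

lemma aux_integral_exp_neg_Ioi {b : ℝ} (hb : 0 < b) (t : ℝ) :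
    ∫ x in Set.Ioi t, Real.exp (-(b * x)) = Real.exp (-(b * t)) / b := by
  have hlim : Tendsto (fun y => -Real.exp (-(b * y)) / b) atTop (𝓝 0) := by
    have h2 : Tendsto (fun y : ℝ => -(b * y)) atTop atBot := by
      exact (Filter.tendsto_neg_atBot_iff.2 (Filter.Tendsto.const_mul_atTop hb tendsto_id))
    have h3 : Tendsto (fun y : ℝ => Real.exp (-(b * y))) atTop (𝓝 0) :=
      Real.tendsto_exp_atBot.comp h2
    simpa using h3.neg.div_const b
  have := integral_Ioi_of_hasDerivAt_of_tendsto'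
    (fun x _ => aux_hasDerivAt_exp_neg hb.ne' x) (aux_intOn_exp_neg_Ioi hb t) hlim
  rw [this]; ring

lemma aux_intOn_exp_Iic {b : ℝ} (hb : 0 < b) (t : ℝ) :
    IntegrableOn (fun x => Real.exp (b * x)) (Set.Iic t) := by
  have h1 : Integrable (Set.indicator (Set.Ioi (-t)) (fun x => Real.exp (-(b * x)))) volume :=
    (integrable_indicator_iff measurableSet_Ioi).2 (aux_intOn_exp_neg_Ioi hb (-t))
  have h2 := h1.comp_neg
  have h3 : (fun x => Set.indicator (Set.Ioi (-t)) (fun x => Real.exp (-(b * x))) (-x))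
      = Set.indicator (Set.Iio t) (fun x => Real.exp (b * x)) := by
    funext x
    by_cases hx : x < t
    · rw [Set.indicator_of_mem (by simpa using hx), Set.indicator_of_mem (by simpa using hx)]
      simp
    · rw [Set.indicator_of_notMem (by simpa using hx), Set.indicator_of_notMem (by simpa using hx)]
  have h4 : IntegrableOn (fun x => Real.exp (b * x)) (Set.Iio t) :=
    (integrable_indicator_iff measurableSet_Iio).1 (by rw [← h3]; exact h2)
  exact (integrableOn_Iic_iff_integrableOn_Iio enorm_ne_top).2 h4

lemma aux_hasDerivAt_exp_pos {b : ℝ} (hb : b ≠ 0) (x : ℝ) :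
    HasDerivAt (fun y => Real.exp (b * y) / b) (Real.exp (b * x)) x := by
  have h1 : HasDerivAt (fun y : ℝ => b * y) b x := by
    simpa using (hasDerivAt_id x).const_mul b
  have h2 := (h1.exp).div_const b
  refine h2.congr_deriv ?_
  field_simp

lemma aux_integral_exp_Iic {b : ℝ} (hb : 0 < b) (t : ℝ) :
    ∫ x in Set.Iic t, Real.exp (b * x) = Real.exp (b * t) / b := by
  have hlim : Tendsto (fun y => Real.exp (b * y) / b) atBot (𝓝 0) := by
    have h2 : Tendsto (fun y : ℝ => b * y) atBot atBot :=
      Filter.Tendsto.const_mul_atBot hb tendsto_id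
    have h3 : Tendsto (fun y : ℝ => Real.exp (b * y)) atBot (𝓝 0) :=
      Real.tendsto_exp_atBot.comp h2
    simpa using h3.div_const b
  have := integral_Iic_of_hasDerivAt_of_tendsto'
    (fun x _ => aux_hasDerivAt_exp_pos hb.ne' x) (aux_intOn_exp_Iic hb t) hlim
  rw [this]; ring


end AuxADE

section MainADE

open Set Filter Topology ENNReal

set_option maxHeartbeats 2000000 in
/-- Well-posedness of a single auxiliary differential equation `cΨ' + Ψ = d·g` on the full
time axis in the weighted space `H_ν(ℝ; ℝ^d)`: the causal formula
`Ψ(t) = ∫_{−∞}^t (d/c)e^{−(t−s)/c} g(s) ds` gives the unique solution, with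
`‖Ψ‖_ν ≤ (d/(1+νc))‖g‖_ν`. -/
theorem ade_wellposed_weighted (n : ℕ) (ν c d : ℝ) (hν : 0 < ν) (hc : 0 < c) (hd : 0 < d)
    (g : ℝ → EuclideanSpace ℝ (Fin n)) (hgcont : Continuous g)
    (hg : Integrable (fun t => ‖g t‖ ^ 2 * Real.exp (-2 * ν * t))) :
    let Ψ : ℝ → EuclideanSpace ℝ (Fin n) :=
      fun t => ∫ s in Set.Iic t, ((d / c) * Real.exp (-(t - s) / c)) • g s
    (Integrable (fun t => ‖Ψ t‖ ^ 2 * Real.exp (-2 * ν * t)) ∧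
      Real.sqrt (∫ t : ℝ, ‖Ψ t‖ ^ 2 * Real.exp (-2 * ν * t)) ≤
        (d / (1 + ν * c)) * Real.sqrt (∫ t : ℝ, ‖g t‖ ^ 2 * Real.exp (-2 * ν * t))) ∧
    (∀ t : ℝ, ∃ Ψ' : EuclideanSpace ℝ (Fin n),
      HasDerivAt Ψ Ψ' t ∧ c • Ψ' + Ψ t = d • g t) ∧
    (∀ (Φ : ℝ → EuclideanSpace ℝ (Fin n)) (Φ' : ℝ → EuclideanSpace ℝ (Fin n)),
      (∀ t, HasDerivAt Φ (Φ' t) t) → (∀ t, c • Φ' t + Φ t = d • g t) →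
      Integrable (fun t => ‖Φ t‖ ^ 2 * Real.exp (-2 * ν * t)) → Φ = Ψ) := by
  intro Ψ
  have hΨbody : ∀ t, Ψ t = ∫ s in Set.Iic t, ((d / c) * Real.exp (-(t - s) / c)) • g s :=
    fun t => rfl
  set a : ℝ := ν + 1 / c with ha_def
  have ha : 0 < a := by positivity
  have hca : c * a = 1 + ν * c := by rw [ha_def]; field_simp; ring
  have hνc : (0 : ℝ) < 1 + ν * c := by positivity
  set K : ℝ := d / (1 + ν * c) with hK_def
  have hK : 0 < K := by positivity
  set h : ℝ → ℝ := fun s => ‖g s‖ * Real.exp (-(ν * s)) with hh_def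
  have hhcont : Continuous h := by fun_prop
  have hhnn : ∀ s, 0 ≤ h s := fun s => by positivity
  have hhsq : ∀ s, h s ^ 2 = ‖g s‖ ^ 2 * Real.exp (-2 * ν * s) := by
    intro s
    rw [hh_def, mul_pow]
    congr 1
    rw [sq, ← Real.exp_add]
    congr 1; ring
  have hh2 : Integrable (fun s => h s ^ 2) := by simp only [hhsq]; exact hg
  have hmemh : MemLp h 2 volume :=
    (memLp_two_iff_integrable_sq hhcont.aestronglyMeasurable).2 hh2
  have hinth : ∀ t : ℝ, IntegrableOn (fun s => Real.exp (a * s) * h s) (Set.Iic t) := by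
    intro t
    have m1 : MemLp (fun s : ℝ => Real.exp (a * s)) 2 (volume.restrict (Set.Iic t)) := by
      refine (memLp_two_iff_integrable_sq ((Real.continuous_exp.comp (continuous_const.mul continuous_id)).aestronglyMeasurable) ).2 ?_
      exact (aux_intOn_exp_Iic (by positivity : (0:ℝ) < 2 * a) t).congr_fun
        (fun s _ => by
          show Real.exp ((2*a)*s) = Real.exp (a*s) ^ 2
          rw [sq, ← Real.exp_add]; congr 1; ring) measurableSet_Iic
    have m2 : MemLp h 2 (volume.restrict (Set.Iic t)) := hmemh.restrict _
    have h12 : (1 : ℝ≥0∞) / 1 = 1 / 2 + 1 / 2 := by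
      rw [ENNReal.div_add_div_same]; norm_num
      exact (ENNReal.div_self (by norm_num) (by norm_num)).symm
    have hsm : MemLp ((fun s : ℝ => Real.exp (a * s)) • h) 1 (volume.restrict (Set.Iic t)) :=
      m2.smul m1 (hpqr := ⟨by rw [ENNReal.inv_two_add_inv_two, inv_one]⟩)
    have := memLp_one_iff_integrable.1 hsm
    simpa [IntegrableOn, Pi.smul_apply', smul_eq_mul, Pi.mul_def] using this
  -- the causal primitive `F` and its derivative
  set G : ℝ → EuclideanSpace ℝ (Fin n) := fun s => Real.exp (s / c) • g s with hG_def
  have hGcont : Continuous G := by fun_prop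
  have hGnorm : ∀ s, ‖G s‖ = Real.exp (a * s) * h s := by
    intro s
    rw [hG_def]
    simp only [norm_smul, Real.norm_eq_abs, abs_of_pos (Real.exp_pos _)]
    rw [hh_def]
    have : Real.exp (a * s) * (‖g s‖ * Real.exp (-(ν * s)))
        = Real.exp (a * s + -(ν * s)) * ‖g s‖ := by rw [Real.exp_add]; ring
    rw [this]
    congr 2
    rw [ha_def]
    field_simp
    ring
  have hGint : ∀ t : ℝ, IntegrableOn G (Set.Iic t) := by
    intro t
    refine Integrable.mono' (hinth t) hGcont.aestronglyMeasurable.restrict ?_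
    filter_upwards with s
    exact le_of_eq (hGnorm s)
  set F : ℝ → EuclideanSpace ℝ (Fin n) := fun t => ∫ s in Set.Iic t, G s with hF_def
  have hFfun : F = fun t => F 0 + ∫ s in (0:ℝ)..t, G s := by
    funext t
    have := intervalIntegral.integral_Iic_sub_Iic (hGint 0) (hGint t)
    rw [hF_def]
    simp only
    rw [← this]
    abel
  have hFderiv : ∀ t : ℝ, HasDerivAt F (G t) t := by
    intro t
    rw [hFfun]
    exact (intervalIntegral.integral_hasDerivAt_right (hGcont.intervalIntegrable 0 t)
      hGcont.stronglyMeasurable.stronglyMeasurableAtFilter hGcont.continuousAt).const_add (F 0)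
  have hΨeq : ∀ t, Ψ t = ((d / c) * Real.exp (-t / c)) • F t := by
    intro t
    rw [hΨbody t, hF_def]
    simp only
    rw [← integral_smul]
    refine setIntegral_congr_fun measurableSet_Iic fun s _ => ?_
    rw [hG_def, smul_smul]
    congr 1
    rw [mul_assoc, ← Real.exp_add]
    congr 1
    field_simp
    ring
  set Ψd : ℝ → EuclideanSpace ℝ (Fin n) := fun t => (-(1/c)) • Ψ t + (d/c) • g t with hΨd_def
  have hφd : ∀ t : ℝ, HasDerivAt (fun u => (d / c) * Real.exp (-u / c))
      (-(1/c) * ((d / c) * Real.exp (-t / c))) t := by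
    intro t
    have h1 : HasDerivAt (fun u : ℝ => -u / c) (-(1/c)) t := by
      simpa [neg_div] using ((hasDerivAt_id t).neg.div_const c)
    have h2 := (h1.exp.const_mul (d / c))
    refine h2.congr_deriv ?_
    ring
  have hΨderiv : ∀ t : ℝ, HasDerivAt Ψ (Ψd t) t := by
    intro t
    have key : HasDerivAt (fun u => ((d / c) * Real.exp (-u / c)) • F u)
        (((d / c) * Real.exp (-t / c)) • G t
          + (-(1/c) * ((d / c) * Real.exp (-t / c))) • F t) t := (hφd t).smul (hFderiv t)
    have hΨfun : Ψ = fun u => ((d / c) * Real.exp (-u / c)) • F u := funext hΨeq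
    rw [hΨfun]
    convert key using 1
    rw [hΨd_def]
    simp only
    rw [hΨeq t, add_comm]
    congr 1
    · rw [hG_def]
      simp only
      rw [smul_smul, mul_assoc, ← Real.exp_add]
      congr 2
      field_simp
      simp
    · rw [smul_smul]
  have heqn : ∀ t : ℝ, c • Ψd t + Ψ t = d • g t := by
    intro t
    rw [hΨd_def]
    simp only
    have h1 : c * (-(1/c)) = -1 := by field_simp
    have h2 : c * (d/c) = d := by field_simp
    rw [smul_add, smul_smul, smul_smul, h1, h2, neg_one_smul]
    abel
  have hΨcont : Continuous Ψ :=
    continuous_iff_continuousAt.2 fun t => (hΨderiv t).continuousAt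
  -- the scalar kernel
  have hOf2 : ENNReal.ofReal (2:ℝ) = 2 := by norm_num
  have hrpow2 : ∀ x : ℝ, x ^ (2:ℝ) = x ^ 2 := fun x => by
    rw [show (2:ℝ) = ((2:ℕ):ℝ) by norm_num, Real.rpow_natCast]
  set ker : ℝ → ℝ → ℝ := fun t s => (d / c) * Real.exp (-(a * (t - s))) with hker_def
  have hkerpos : ∀ t s, 0 < ker t s := fun t s => by
    rw [hker_def]; positivity
  have hkercont : ∀ t, Continuous (fun s => ker t s) := by
    intro t; simp only [hker_def]; fun_prop
  have kersplit1 : ∀ t s, ker t s = ((d/c) * Real.exp (-(a*t))) * Real.exp (a * s) := by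
    intro t s
    rw [hker_def]
    simp only
    rw [mul_assoc, ← Real.exp_add]
    congr 2
    ring
  have hkerint : ∀ t, IntegrableOn (fun s => ker t s) (Set.Iic t) := by
    intro t
    have e : (fun s => ker t s) = fun s => ((d/c) * Real.exp (-(a*t))) * Real.exp (a * s) :=
      funext fun s => kersplit1 t s
    rw [e]
    exact (aux_intOn_exp_Iic ha t).const_mul _
  have hkerintegral : ∀ t, (∫ s in Set.Iic t, ker t s) = K := by
    intro t
    have e : (fun s => ker t s) = fun s => ((d/c) * Real.exp (-(a*t))) * Real.exp (a * s) :=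
      funext fun s => kersplit1 t s
    rw [e, MeasureTheory.integral_const_mul, aux_integral_exp_Iic ha t]
    have hexp : Real.exp (-(a*t)) * Real.exp (a*t) = 1 := by
      rw [← Real.exp_add]; simp
    calc (d/c) * Real.exp (-(a*t)) * (Real.exp (a*t)/a)
        = (d/c) * (Real.exp (-(a*t)) * Real.exp (a*t)) / a := by ring
      _ = d / (c*a) := by rw [hexp, mul_one, div_div]
      _ = K := by rw [hK_def, hca]
  -- pointwise bound for the weighted solution
  have hPbound : ∀ t, ‖Ψ t‖ * Real.exp (-(ν * t)) ≤ ∫ s in Set.Iic t, ker t s * h s := by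
    intro t
    have h1 : ‖Ψ t‖ ≤ ∫ s in Set.Iic t, ((d / c) * Real.exp (-(t - s) / c)) * ‖g s‖ := by
      rw [hΨbody t]
      refine (norm_integral_le_integral_norm _).trans_eq ?_
      refine setIntegral_congr_fun measurableSet_Iic fun s _ => ?_
      rw [norm_smul, Real.norm_eq_abs, abs_of_pos (by positivity)]
    have h2 : (∫ s in Set.Iic t, ((d / c) * Real.exp (-(t - s) / c)) * ‖g s‖) * Real.exp (-(ν*t))
        = ∫ s in Set.Iic t, ker t s * h s := by
      rw [← integral_mul_const]
      refine setIntegral_congr_fun measurableSet_Iic fun s _ => ?_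
      have hexp : Real.exp (-(t-s)/c) * Real.exp (-(ν*t))
          = Real.exp (-(a*(t-s))) * Real.exp (-(ν*s)) := by
        rw [← Real.exp_add, ← Real.exp_add]
        congr 1
        rw [ha_def]
        field_simp
        ring
      calc ((d / c) * Real.exp (-(t - s) / c)) * ‖g s‖ * Real.exp (-(ν*t))
          = (d/c) * ‖g s‖ * (Real.exp (-(t-s)/c) * Real.exp (-(ν*t))) := by ring
        _ = (d/c) * ‖g s‖ * (Real.exp (-(a*(t-s))) * Real.exp (-(ν*s))) := by rw [hexp]
        _ = ker t s * h s := by simp only [hker_def, hh_def]; ring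
    calc ‖Ψ t‖ * Real.exp (-(ν * t))
        ≤ (∫ s in Set.Iic t, ((d / c) * Real.exp (-(t - s) / c)) * ‖g s‖) * Real.exp (-(ν*t)) :=
          mul_le_mul_of_nonneg_right h1 (Real.exp_pos _).le
      _ = _ := h2
  have hQnn : ∀ t, 0 ≤ ∫ s in Set.Iic t, ker t s * h s ^ 2 :=
    fun t => integral_nonneg fun s => mul_nonneg (hkerpos t s).le (sq_nonneg _)
  have hkerh2int : ∀ t, IntegrableOn (fun s => ker t s * h s ^ 2) (Set.Iic t) := by
    intro t
    refine Integrable.bdd_mul (c := d/c) hh2.restrict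
      ((hkercont t).aestronglyMeasurable.restrict) ?_
    refine (ae_restrict_iff' measurableSet_Iic).2 (Filter.Eventually.of_forall fun s hs => ?_)
    rw [Real.norm_eq_abs, abs_of_pos (hkerpos t s), hker_def]
    simp only
    have he1 : Real.exp (-(a*(t-s))) ≤ 1 := by
      rw [show (1:ℝ) = Real.exp 0 from (Real.exp_zero).symm]
      refine Real.exp_le_exp.2 ?_
      have : s ≤ t := hs
      nlinarith
    calc (d/c) * Real.exp (-(a*(t-s))) ≤ (d/c) * 1 :=
        mul_le_mul_of_nonneg_left he1 (by positivity)
      _ = d/c := mul_one _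
  -- Cauchy--Schwarz with respect to the kernel measure
  have hPQ : ∀ t, (∫ s in Set.Iic t, ker t s * h s) ^ 2
      ≤ K * ∫ s in Set.Iic t, ker t s * h s ^ 2 := by
    intro t
    have hconj : Real.HolderConjugate 2 2 := ⟨by norm_num, by norm_num, by norm_num⟩
    have hsqc : Continuous (fun s => Real.sqrt (ker t s)) :=
      Real.continuous_sqrt.comp (hkercont t)
    have hsq1 : ∀ s, Real.sqrt (ker t s) ^ 2 = ker t s := fun s => Real.sq_sqrt (hkerpos t s).le
    have hm1 : MemLp (fun s => Real.sqrt (ker t s)) (ENNReal.ofReal 2)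
        (volume.restrict (Set.Iic t)) := by
      rw [hOf2]
      refine (memLp_two_iff_integrable_sq hsqc.aestronglyMeasurable.restrict).2 ?_
      have e : (fun s => Real.sqrt (ker t s) ^ 2) = fun s => ker t s := funext hsq1
      rw [e]; exact hkerint t
    have hm2 : MemLp (fun s => Real.sqrt (ker t s) * h s) (ENNReal.ofReal 2)
        (volume.restrict (Set.Iic t)) := by
      rw [hOf2]
      refine (memLp_two_iff_integrable_sq (hsqc.mul hhcont).aestronglyMeasurable.restrict).2 ?_
      have e : (fun s => (Real.sqrt (ker t s) * h s) ^ 2) = fun s => ker t s * h s ^ 2 := by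
        funext s; rw [mul_pow, hsq1]
      simp only [Pi.mul_apply]; rw [e]; exact hkerh2int t
    have hcs := integral_mul_le_Lp_mul_Lq_of_nonneg hconj
      (Filter.Eventually.of_forall fun s => Real.sqrt_nonneg _)
      (Filter.Eventually.of_forall fun s => mul_nonneg (Real.sqrt_nonneg _) (hhnn s)) hm1 hm2
    have e1 : (∫ s in Set.Iic t, Real.sqrt (ker t s) * (Real.sqrt (ker t s) * h s))
        = ∫ s in Set.Iic t, ker t s * h s := by
      refine setIntegral_congr_fun measurableSet_Iic fun s _ => ?_
      rw [← mul_assoc, ← sq, hsq1]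
    have e2 : (∫ s in Set.Iic t, Real.sqrt (ker t s) ^ (2:ℝ)) = K := by
      rw [← hkerintegral t]
      refine setIntegral_congr_fun measurableSet_Iic fun s _ => ?_
      rw [hrpow2, hsq1]
    have e3 : (∫ s in Set.Iic t, (Real.sqrt (ker t s) * h s) ^ (2:ℝ))
        = ∫ s in Set.Iic t, ker t s * h s ^ 2 := by
      refine setIntegral_congr_fun measurableSet_Iic fun s _ => ?_
      rw [hrpow2, mul_pow, hsq1]
    rw [e1, e2, e3] at hcs
    have hP0 : 0 ≤ ∫ s in Set.Iic t, ker t s * h s :=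
      integral_nonneg fun s => mul_nonneg (hkerpos t s).le (hhnn s)
    calc (∫ s in Set.Iic t, ker t s * h s) ^ 2
        ≤ (K ^ ((1:ℝ)/2) * (∫ s in Set.Iic t, ker t s * h s ^ 2) ^ ((1:ℝ)/2)) ^ 2 :=
          pow_le_pow_left₀ hP0 hcs 2
      _ = K * ∫ s in Set.Iic t, ker t s * h s ^ 2 := by
          rw [mul_pow, ← Real.sqrt_eq_rpow, ← Real.sqrt_eq_rpow,
            Real.sq_sqrt hK.le, Real.sq_sqrt (hQnn t)]
  -- Fubini for the dominating kernel integral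
  set W : ℝ × ℝ → ℝ := fun p =>
    Set.indicator {q : ℝ × ℝ | q.2 ≤ q.1} (fun q => ker q.1 q.2 * h q.2 ^ 2) p with hW_def
  have hWcont : Continuous (fun q : ℝ × ℝ => ker q.1 q.2 * h q.2 ^ 2) := by
    simp only [hker_def]; fun_prop
  have hWmeas : AEStronglyMeasurable W (volume.prod volume) := by
    rw [hW_def]
    exact (hWcont.stronglyMeasurable.indicator
      (measurableSet_le measurable_snd measurable_fst)).aestronglyMeasurable
  have hWnn : ∀ p, 0 ≤ W p := by
    intro p
    rw [hW_def]
    exact Set.indicator_nonneg (fun q _ => mul_nonneg (hkerpos q.1 q.2).le (sq_nonneg _)) p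
  have hWslice_eq : ∀ s : ℝ, (fun t => W (t, s)) = Set.indicator (Set.Ici s)
      (fun t => ((d/c) * Real.exp (a*s) * h s ^ 2) * Real.exp (-(a * t))) := by
    intro s
    funext t
    simp only [hW_def]
    by_cases hts : s ≤ t
    · rw [Set.indicator_of_mem (show (t,s) ∈ {q : ℝ × ℝ | q.2 ≤ q.1} from hts),
        Set.indicator_of_mem (show t ∈ Set.Ici s from hts)]
      rw [kersplit1]
      ring
    · rw [Set.indicator_of_notMem (show (t,s) ∉ {q : ℝ × ℝ | q.2 ≤ q.1} from hts),
        Set.indicator_of_notMem (show t ∉ Set.Ici s from hts)]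
  have hWslice : ∀ s : ℝ, Integrable (fun t => W (t, s)) := by
    intro s
    rw [hWslice_eq s]
    refine (integrable_indicator_iff measurableSet_Ici).2 ?_
    rw [integrableOn_Ici_iff_integrableOn_Ioi]
    exact (aux_intOn_exp_neg_Ioi ha s).const_mul _
  have hWnormint : ∀ s : ℝ, (∫ t, ‖W (t, s)‖) = K * h s ^ 2 := by
    intro s
    have e0 : (fun t => ‖W (t, s)‖) = fun t => W (t, s) :=
      funext fun t => Real.norm_of_nonneg (hWnn _)
    rw [e0, hWslice_eq s, integral_indicator measurableSet_Ici,
      integral_Ici_eq_integral_Ioi, MeasureTheory.integral_const_mul,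
      aux_integral_exp_neg_Ioi ha s]
    have hexp : Real.exp (a*s) * Real.exp (-(a*s)) = 1 := by
      rw [← Real.exp_add]; simp
    calc (d/c) * Real.exp (a*s) * h s ^ 2 * (Real.exp (-(a*s))/a)
        = (Real.exp (a*s) * Real.exp (-(a*s))) * ((d/c)/a * h s ^ 2) := by ring
      _ = (d/c)/a * h s ^ 2 := by rw [hexp, one_mul]
      _ = K * h s ^ 2 := by rw [hK_def, div_div, hca]
  have hWint : Integrable W (volume.prod volume) := by
    refine (integrable_prod_iff' hWmeas).2 ⟨Filter.Eventually.of_forall hWslice, ?_⟩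
    have e : (fun s => ∫ t, ‖W (t, s)‖) = fun s => K * h s ^ 2 := funext hWnormint
    rw [e]
    exact hh2.const_mul K
  have hQeq : ∀ t, (∫ s in Set.Iic t, ker t s * h s ^ 2) = ∫ s, W (t, s) := by
    intro t
    rw [← integral_indicator measurableSet_Iic]
    refine integral_congr_ae (Filter.Eventually.of_forall fun s => ?_)
    simp only [hW_def]
    by_cases hs : s ≤ t
    · rw [Set.indicator_of_mem (show s ∈ Set.Iic t from hs),
        Set.indicator_of_mem (show (t,s) ∈ {q : ℝ × ℝ | q.2 ≤ q.1} from hs)]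
    · rw [Set.indicator_of_notMem (show s ∉ Set.Iic t from hs),
        Set.indicator_of_notMem (show (t,s) ∉ {q : ℝ × ℝ | q.2 ≤ q.1} from hs)]
  have hQint : Integrable (fun t => ∫ s, W (t, s)) := hWint.integral_prod_left
  have hQvalue : (∫ t, ∫ s, W (t, s)) = K * ∫ s, h s ^ 2 := by
    rw [integral_integral_swap (f := fun t s => W (t, s)) hWint]
    have e : (fun s => ∫ t, W (t, s)) = fun s => K * h s ^ 2 := by
      funext s
      rw [← hWnormint s]
      congr 1
      funext t
      rw [Real.norm_of_nonneg (hWnn _)]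
    rw [e, MeasureTheory.integral_const_mul]
  have hΨptw : ∀ t, ‖Ψ t‖ ^ 2 * Real.exp (-2 * ν * t) ≤ K * ∫ s, W (t, s) := by
    intro t
    have e1 : ‖Ψ t‖ ^ 2 * Real.exp (-2*ν*t) = (‖Ψ t‖ * Real.exp (-(ν*t))) ^ 2 := by
      rw [mul_pow]
      congr 1
      rw [sq, ← Real.exp_add]
      congr 1
      ring
    rw [e1, ← hQeq t]
    exact le_trans (pow_le_pow_left₀ (by positivity) (hPbound t) 2) (hPQ t)
  have hΨw : Integrable (fun t => ‖Ψ t‖ ^ 2 * Real.exp (-2 * ν * t)) := by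
    refine Integrable.mono' (hQint.const_mul K) ?_ ?_
    · exact ((hΨcont.norm.pow 2).mul
        (Real.continuous_exp.comp (by fun_prop))).aestronglyMeasurable
    · filter_upwards with t
      rw [Real.norm_of_nonneg (by positivity)]
      exact hΨptw t
  have hIle : (∫ t, ‖Ψ t‖ ^ 2 * Real.exp (-2*ν*t)) ≤ K^2 * ∫ s, h s ^ 2 := by
    calc (∫ t, ‖Ψ t‖ ^ 2 * Real.exp (-2*ν*t)) ≤ ∫ t, K * ∫ s, W (t, s) :=
        integral_mono hΨw (hQint.const_mul K) hΨptw
      _ = K * ∫ t, ∫ s, W (t, s) := MeasureTheory.integral_const_mul K _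
      _ = K * (K * ∫ s, h s ^ 2) := by rw [hQvalue]
      _ = K^2 * ∫ s, h s ^ 2 := by ring
  have hgIeq : (∫ s, h s ^ 2) = ∫ t, ‖g t‖ ^ 2 * Real.exp (-2*ν*t) := by
    simp only [hhsq]
  have hsqrtle : Real.sqrt (∫ t, ‖Ψ t‖ ^ 2 * Real.exp (-2*ν*t))
      ≤ K * Real.sqrt (∫ t, ‖g t‖ ^ 2 * Real.exp (-2*ν*t)) := by
    rw [← hgIeq]
    have h1 := Real.sqrt_le_sqrt hIle
    rwa [Real.sqrt_mul (by positivity : (0:ℝ) ≤ K^2), Real.sqrt_sq hK.le] at h1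
  refine ⟨⟨hΨw, hsqrtle⟩, fun t => ⟨Ψd t, hΨderiv t, heqn t⟩, ?_⟩
  -- uniqueness
  intro Φ Φ' hΦd hΦeq hΦw
  have hΦcont : Continuous Φ := continuous_iff_continuousAt.2 fun t => (hΦd t).continuousAt
  have hδ' : ∀ t, Φ' t - Ψd t = (-(1/c)) • (Φ t - Ψ t) := by
    intro t
    have hc' : (c:ℝ) ≠ 0 := hc.ne'
    have hm : c * (-(1/c)) = -1 := by field_simp
    have e1 : c • Φ' t = d • g t - Φ t := eq_sub_of_add_eq (hΦeq t)
    have e2 : c • Ψd t = d • g t - Ψ t := eq_sub_of_add_eq (heqn t)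
    refine smul_right_injective (EuclideanSpace ℝ (Fin n)) hc' ?_
    show c • (Φ' t - Ψd t) = c • ((-(1/c)) • (Φ t - Ψ t))
    rw [smul_smul, hm, neg_one_smul, smul_sub, e1, e2]
    abel
  have hu : ∀ t, HasDerivAt (fun u => Real.exp (u / c) • (Φ u - Ψ u)) 0 t := by
    intro t
    have h1 : HasDerivAt (fun u : ℝ => Real.exp (u / c)) (Real.exp (t/c) * (1/c)) t := by
      simpa using ((hasDerivAt_id t).div_const c).exp
    have h2 := h1.fun_smul ((hΦd t).fun_sub (hΨderiv t))
    refine h2.congr_deriv ?_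
    rw [hδ' t, smul_smul, ← add_smul,
      show Real.exp (t/c) * (-(1/c)) + Real.exp (t/c) * (1/c) = 0 by ring, zero_smul]
  have hucst : ∀ t, Real.exp (t/c) • (Φ t - Ψ t) = Φ 0 - Ψ 0 := by
    intro t
    have hconst := is_const_of_deriv_eq_zero (𝕜 := ℝ)
      (f := fun u => Real.exp (u / c) • (Φ u - Ψ u))
      (fun x => (hu x).differentiableAt) (fun x => (hu x).deriv) t 0
    simpa using hconst
  have hδeq : ∀ t, Φ t - Ψ t = Real.exp (-(t/c)) • (Φ 0 - Ψ 0) := by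
    intro t
    rw [← hucst t, smul_smul, ← Real.exp_add]
    simp
  have hδw : Integrable (fun t => ‖Φ t - Ψ t‖ ^ 2 * Real.exp (-2*ν*t)) := by
    have hb : Integrable (fun t => 2 * (‖Φ t‖ ^ 2 * Real.exp (-2*ν*t))
        + 2 * (‖Ψ t‖ ^ 2 * Real.exp (-2*ν*t))) := (hΦw.const_mul 2).add (hΨw.const_mul 2)
    refine Integrable.mono' hb ?_ ?_
    · exact ((((hΦcont.sub hΨcont).norm.pow 2).mul
        (Real.continuous_exp.comp (by fun_prop))).aestronglyMeasurable)
    · filter_upwards with t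
      rw [Real.norm_of_nonneg (by positivity)]
      have h2 : ‖Φ t - Ψ t‖ ^ 2 ≤ 2*‖Φ t‖^2 + 2*‖Ψ t‖^2 := by
        have h1 : ‖Φ t - Ψ t‖ ≤ ‖Φ t‖ + ‖Ψ t‖ := norm_sub_le _ _
        nlinarith [pow_le_pow_left₀ (norm_nonneg (Φ t - Ψ t)) h1 2,
          sq_nonneg (‖Φ t‖ - ‖Ψ t‖)]
      have h3 := mul_le_mul_of_nonneg_right h2 (Real.exp_pos (-2*ν*t)).le
      have h4 : (2*‖Φ t‖^2 + 2*‖Ψ t‖^2) * Real.exp (-2*ν*t)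
          = 2 * (‖Φ t‖ ^ 2 * Real.exp (-2*ν*t)) + 2 * (‖Ψ t‖ ^ 2 * Real.exp (-2*ν*t)) := by
        ring
      linarith
  have hδ0 : Φ 0 - Ψ 0 = 0 := by
    by_contra h0
    have hpos : 0 < ‖Φ 0 - Ψ 0‖ ^ 2 := pow_pos (norm_pos_iff.mpr h0) 2
    have hval : ∀ t, ‖Φ t - Ψ t‖ ^ 2 * Real.exp (-2*ν*t)
        = ‖Φ 0 - Ψ 0‖ ^ 2 * Real.exp (-(2*a)*t) := by
      intro t
      rw [hδeq t, norm_smul, Real.norm_eq_abs, abs_of_pos (Real.exp_pos _), mul_pow]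
      have hexp : Real.exp (-(t/c)) ^ 2 * Real.exp (-2*ν*t) = Real.exp (-(2*a)*t) := by
        rw [sq, ← Real.exp_add, ← Real.exp_add]
        congr 1
        rw [ha_def]
        field_simp
        ring
      calc Real.exp (-(t/c))^2 * ‖Φ 0 - Ψ 0‖^2 * Real.exp (-2*ν*t)
          = ‖Φ 0 - Ψ 0‖^2 * (Real.exp (-(t/c))^2 * Real.exp (-2*ν*t)) := by ring
        _ = ‖Φ 0 - Ψ 0‖^2 * Real.exp (-(2*a)*t) := by rw [hexp]
    have hInt2 : Integrable (fun t => ‖Φ 0 - Ψ 0‖ ^ 2 * Real.exp (-(2*a)*t)) := by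
      rw [← funext hval]
      exact hδw
    have hfin := hInt2.measure_ge_lt_top hpos
    have hsub : Set.Iic (0:ℝ)
        ⊆ {t : ℝ | ‖Φ 0 - Ψ 0‖ ^ 2 ≤ ‖Φ 0 - Ψ 0‖ ^ 2 * Real.exp (-(2*a)*t)} := by
      intro t ht
      have ht' : t ≤ 0 := ht
      simp only [Set.mem_setOf_eq]
      have h1 : (1:ℝ) ≤ Real.exp (-(2*a)*t) := by
        rw [show (1:ℝ) = Real.exp 0 from Real.exp_zero.symm]
        refine Real.exp_le_exp.2 ?_
        nlinarith
      nlinarith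
    have hmono : volume (Set.Iic (0:ℝ))
        ≤ volume {t : ℝ | ‖Φ 0 - Ψ 0‖ ^ 2 ≤ ‖Φ 0 - Ψ 0‖ ^ 2 * Real.exp (-(2*a)*t)} :=
      measure_mono hsub
    rw [Real.volume_Iic] at hmono
    exact lt_irrefl _ (lt_of_le_of_lt hmono hfin)
  funext t
  have hfin := hδeq t
  rw [hδ0, smul_zero] at hfin
  exact sub_eq_zero.1 hfin


end MainADE
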